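/- The map φ(x) = (x, 1 − x, 1 − 1/x) is a bijection from ℂ ∖ {0,1} onto 𝔛_CR = {(x₁,x₂,x₃) ∈ ℂ³ : x₁,x₂,x₃ ≠ 0, x₁ + x₂ = 1, 1/x₂ + 1/x₃ = 1, x₃ + 1/x₁ = 1}. Moreover every point of 𝔛_CR satisfies the defining equations of 𝔛 (so 𝔛_CR ⊆ 𝔛), and φ(x) lies in 𝔛_ℝ if and only if x ∈ ℝ ∖ {0,1}. (Hence the CR-singular set 𝔛_CR is a 1-dimensional complex manifold biholomorphic to ℂ ∖ {0,1}, containing 𝔛_ℝ.) -/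

import Mathlib

noncomputable section

open Complex

/-- Falbel's cross-ratio variety 𝔛 as a subset of ℂ³. -/
def Xvar : Set (ℂ × ℂ × ℂ) :=
  {x | x.1 ≠ 0 ∧ x.2.1 ≠ 0 ∧ x.2.2 ≠ 0 ∧
    ‖x.2.1‖ = ‖x.1‖ * ‖x.2.2‖ ∧
    2 * (‖x.1‖) ^ 2 * x.2.2.re =
      (‖x.1‖) ^ 2 + (‖x.2.1‖) ^ 2
        - 2 * x.1.re - 2 * x.2.1.re + 1}

/-- The CR-singular set 𝔛_CR. -/
def XCR : Set (ℂ × ℂ × ℂ) :=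
  {x | x.1 ≠ 0 ∧ x.2.1 ≠ 0 ∧ x.2.2 ≠ 0 ∧
    x.1 + x.2.1 = 1 ∧ 1 / x.2.1 + 1 / x.2.2 = 1 ∧ x.2.2 + 1 / x.1 = 1}

/-- The real singular set 𝔛_ℝ. -/
def XR : Set (ℂ × ℂ × ℂ) :=
  {x | x ∈ Xvar ∧ x.1.im = 0 ∧ x.2.1.im = 0 ∧ x.2.2.im = 0 ∧
    x.1 + x.2.1 = 1 ∧ 1 / x.2.1 + 1 / x.2.2 = 1 ∧ x.2.2 + 1 / x.1 = 1}

/-- The parametrisation of the CR-singular set. -/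
def phi (x : ℂ) : ℂ × ℂ × ℂ := (x, 1 - x, 1 - 1 / x)

lemma phi_mem_XCR {x : ℂ} (hx0 : x ≠ 0) (hx1 : x ≠ 1) : phi x ∈ XCR := by
  have h1 : (1 : ℂ) - x ≠ 0 := sub_ne_zero.mpr (fun h => hx1 h.symm)
  have h1' : x - 1 ≠ 0 := sub_ne_zero.mpr hx1
  have h2 : (1 : ℂ) - 1 / x ≠ 0 := by
    intro h
    field_simp at h
    rw [mul_zero] at h
    exact hx1 (sub_eq_zero.mp h)
  simp only [XCR, phi, Set.mem_setOf_eq]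
  refine ⟨hx0, h1, h2, by ring, ?_, by field_simp; ring⟩
  rw [div_add_div _ _ h1 h2, div_eq_one_iff_eq (mul_ne_zero h1 h2)]
  field_simp
  ring

lemma XCR_eqs {p : ℂ × ℂ × ℂ} (hp : p ∈ XCR) :
    p.2.1 = 1 - p.1 ∧ p.2.2 = 1 - 1 / p.1 := by
  obtain ⟨h1, h2, h3, e1, e2, e3⟩ := hp
  constructor
  · linear_combination e1
  · linear_combination e3

lemma XCR_subset_Xvar : XCR ⊆ Xvar := by
  rintro ⟨a, b, c⟩ hp
  obtain ⟨hb, hc⟩ := XCR_eqs hp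
  obtain ⟨h1, h2, h3, e1, e2, e3⟩ := hp
  simp only at hb hc h1 h2 h3
  subst hb hc
  simp only [Xvar, Set.mem_setOf_eq]
  refine ⟨h1, h2, h3, ?_, ?_⟩
  · have key : a * (1 - 1 / a) = -(1 - a) := by field_simp; ring
    have := congrArg (‖·‖) key
    rw [norm_mul, norm_neg] at this
    exact this.symm
  · have hns : Complex.normSq a ≠ 0 := (Complex.normSq_pos.mpr h1).ne'
    have hre : ((1 : ℂ) - 1 / a).re = 1 - a.re / Complex.normSq a := by
      simp [Complex.sub_re, Complex.div_re, Complex.normSq_apply]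
    simp only [hre, Complex.sq_norm]
    rw [Complex.normSq_apply, Complex.normSq_apply] at *
    simp only [Complex.sub_re, Complex.sub_im, Complex.one_re, Complex.one_im]
    have hns' : a.re ^ 2 + a.im ^ 2 ≠ 0 := by rw [sq, sq]; exact hns
    field_simp
    ring

/-- `φ(x) = (x, 1−x, 1−1/x)` is a bijection of `ℂ ∖ {0,1}` onto 𝔛_CR;
moreover 𝔛_CR ⊆ 𝔛, and `φ(x) ∈ 𝔛_ℝ` iff `x` is real. -/
theorem XCR_parametrisation :
    Set.BijOn phi {x : ℂ | x ≠ 0 ∧ x ≠ 1} XCR ∧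
    XCR ⊆ Xvar ∧
    (∀ x : ℂ, x ≠ 0 → x ≠ 1 → (phi x ∈ XR ↔ x.im = 0)) := by
  refine ⟨⟨?_, ?_, ?_⟩, XCR_subset_Xvar, ?_⟩
  · rintro x ⟨hx0, hx1⟩
    exact phi_mem_XCR hx0 hx1
  · rintro x _ y _ h
    exact congrArg Prod.fst h
  · rintro ⟨a, b, c⟩ hp
    obtain ⟨hb, hc⟩ := XCR_eqs hp
    obtain ⟨h1, h2, h3, -, -, -⟩ := hp
    simp only at hb hc h1 h2 h3 ⊢
    refine ⟨a, ⟨h1, ?_⟩, ?_⟩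
    · intro h; subst h; simp at hb; exact h2 hb
    · simp [phi, hb, hc]
  · intro x hx0 hx1
    constructor
    · rintro ⟨-, him, -⟩
      exact him
    · intro him
      have hm := phi_mem_XCR hx0 hx1
      obtain ⟨h1, h2, h3, e1, e2, e3⟩ := hm
      refine ⟨XCR_subset_Xvar (phi_mem_XCR hx0 hx1), him, ?_, ?_, e1, e2, e3⟩
      · simp [phi, him]
      · simp [phi, Complex.div_im, him]
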